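/- Let G be a finite simple graph that is a forest (equivalently, 1-degenerate: every subgraph of G has a vertex of degree at most 1). Then the edge set of G can be partitioned into ⌈Δ(G)/2⌉ linear forests, i.e., the linear arboricity of G equals ⌈Δ(G)/2⌉ when G has at least one edge. -/

import Mathlib

/-- A linear forest: a graph in which every connected component is a path,
equivalently every vertex has degree at most 2 and there are no cycles. -/
def IsLinearForest {V : Type*} (G : SimpleGraph V) : Prop :=
  G.IsAcyclic ∧ ∀ v : V, (G.neighborSet v).ncard ≤ 2

/-- A partition of the edge set of `G` into `t` linear forests (viewed as
spanning subgraphs). -/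
def IsLinearForestPartition {V : Type*} (G : SimpleGraph V) (t : ℕ)
    (F : Fin t → SimpleGraph V) : Prop :=
  (∀ i, IsLinearForest (F i)) ∧
  (Pairwise fun i j : Fin t => Disjoint (F i).edgeSet (F j).edgeSet) ∧
  (⋃ i, (F i).edgeSet) = G.edgeSet

/-- `G` is `k`-degenerate: every (nonempty) subgraph of `G` has a vertex of
degree at most `k`. -/
def KDegenerate {V : Type*} (G : SimpleGraph V) (k : ℕ) : Prop :=
  ∀ H : G.Subgraph, H.verts.Nonempty → ∃ v ∈ H.verts, (H.neighborSet v).ncard ≤ k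

section Aux
open SimpleGraph
variable {V : Type*} [DecidableEq V]


lemma isAcyclic_mono {G H : SimpleGraph V} (h : H ≤ G) (hG : G.IsAcyclic) : H.IsAcyclic := by
  intro v c hc
  exact hG (c.mapLe h) (hc.mapLe h)

lemma pendant_acyclic {G : SimpleGraph V} (hG : G.IsAcyclic) {v u : V} (hvu : v ≠ u)
    (hv : ∀ w, ¬ G.Adj v w) : (G ⊔ SimpleGraph.fromEdgeSet {s(v,u)}).IsAcyclic := by
  set H := G ⊔ SimpleGraph.fromEdgeSet {s(v,u)} with hH
  have hadj : ∀ w, H.Adj v w → w = u := by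
    intro w hw
    rcases hw with hw | hw
    · exact absurd hw (hv w)
    · rw [fromEdgeSet_adj] at hw
      have := hw.1
      rw [Set.mem_singleton_iff, Sym2.eq_iff] at this
      rcases this with ⟨_, h2⟩ | ⟨h1, _⟩
      · exact h2
      · exact absurd h1 hvu
  intro x c hc
  by_cases hvc : v ∈ c.support
  · -- rotate to start at v
    have hc' := hc.rotate hvc
    set c' := c.rotate v hvc with hc'def
    clear_value c'
    cases c' with
    | nil => exact hc'.ne_nil rfl
    | cons h p =>
      rename_i w
      have hw : w = u := hadj w h
      have hpne : ¬ p.Nil := Walk.not_nil_of_ne (by rw [hw]; exact fun h => hvu h.symm)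
      have hrev : s(v,w) ∈ p.edges := by
        cases hq : p.reverse with
        | nil =>
          have hl0 : p.length = 0 := by
            have := congrArg Walk.length hq
            rw [Walk.length_reverse, Walk.length_nil] at this
            exact this
          exact absurd (Walk.nil_iff_length_eq.mpr hl0) hpne
        | cons h2 q2 =>
          rename_i z
          have hz : z = u := hadj z h2
          have h5 : s(v,w) ∈ p.reverse.edges := by
            have hwz : s(v,w) = s(v,z) := by rw [hz, hw]
            rw [hq, Walk.edges_cons, hwz]
            exact List.mem_cons_self
          rwa [Walk.edges_reverse, List.mem_reverse] at h5
      have hnd : (Walk.cons h p).edges.Nodup := hc'.edges_nodup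
      rw [Walk.edges_cons] at hnd
      exact (List.nodup_cons.mp hnd).1 hrev
  · -- transfer cycle to G
    have hsub : ∀ e ∈ c.edges, e ∈ G.edgeSet := by
      intro e he
      have heH : e ∈ H.edgeSet := c.edges_subset_edgeSet he
      rw [hH, edgeSet_sup] at heH
      rcases heH with heG | heE
      · exact heG
      · exfalso
        rw [edgeSet_fromEdgeSet] at heE
        have : e = s(v,u) := heE.1
        subst this
        exact hvc (c.fst_mem_support_of_mem_edges he)
    exact hG (c.transfer G hsub) (hc.transfer hsub)

lemma exists_leaf [Fintype V] {G : SimpleGraph V} (hG : G.IsAcyclic)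
    (hne : G.edgeSet.Nonempty) : ∃ v u, G.Adj v u ∧ G.neighborSet v = {u} := by
  classical
  obtain ⟨e, he⟩ := hne
  induction e with
  | h a b =>
  rw [mem_edgeSet] at he
  set P : ℕ → Prop := fun m => ∃ (x y : V) (p : G.Walk x y), p.IsPath ∧ p.length = m with hP
  have hP1 : P 1 := ⟨a, b, (SimpleGraph.Path.singleton he).1, (SimpleGraph.Path.singleton he).2, rfl⟩
  have hbound : ∀ m, P m → m ≤ Fintype.card V := by
    rintro m ⟨x, y, p, hp, rfl⟩
    exact hp.length_lt.le
  set n := Nat.findGreatest P (Fintype.card V) with hn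
  have hPn : P n := Nat.findGreatest_spec (hbound 1 hP1) hP1
  have hn1 : 1 ≤ n := Nat.le_findGreatest (hbound 1 hP1) hP1
  obtain ⟨x, y, p, hp, hl⟩ := hPn
  have hrp : p.reverse.IsPath := hp.reverse
  have hrl : p.reverse.length = n := by rw [Walk.length_reverse, hl]
  set r := p.reverse with hr
  clear_value r
  cases r with
  | nil => rw [Walk.length_nil] at hrl; omega
  | cons h q =>
    rename_i c
    refine ⟨y, c, h, ?_⟩
    apply Set.eq_singleton_iff_unique_mem.mpr ⟨h, ?_⟩
    intro w hw
    replace hw : G.Adj y w := hw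
    by_contra hwc
    have hwy : w ≠ y := hw.ne'
    rw [Walk.cons_isPath_iff] at hrp
    by_cases hws : w ∈ q.support
    · have hws' : w ∈ (Walk.cons h q).support := by
        rw [Walk.support_cons]; exact List.mem_cons_of_mem _ hws
      have hq0 : ((Walk.cons h q).takeUntil w hws').IsPath :=
        ((Walk.cons_isPath_iff _ _).mpr hrp).takeUntil hws'
      have huniq := hG.path_unique (SimpleGraph.Path.singleton hw) ⟨_, hq0⟩
      have hval : (Walk.cons hw Walk.nil) = (Walk.cons h q).takeUntil w hws' :=
        congrArg Subtype.val huniq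
      have hspec := (Walk.cons h q).take_spec hws'
      rw [← hval, Walk.cons_append, Walk.nil_append] at hspec
      have hsupp := congrArg Walk.support hspec
      rw [Walk.support_cons, Walk.support_cons] at hsupp
      have htails := (List.cons_eq_cons.mp hsupp).2
      rw [Walk.support_eq_cons, Walk.support_eq_cons q] at htails
      exact hwc (List.cons_eq_cons.mp htails).1
    · have hwsup : w ∉ (Walk.cons h q).support := by
        rw [Walk.support_cons]
        intro hmem
        rcases List.mem_cons.mp hmem with h1 | h1
        · exact hwy h1
        · exact hws h1
      have hext : (Walk.cons hw.symm (Walk.cons h q)).IsPath := by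
        rw [Walk.cons_isPath_iff]
        exact ⟨(Walk.cons_isPath_iff _ _).mpr hrp, hwsup⟩
      have hPn1 : P (n + 1) := ⟨w, x, _, hext, by simp [Walk.length_cons, ← hrl]⟩
      exact Nat.findGreatest_is_greatest (by omega) (hbound _ hPn1) hPn1

lemma isLinearForest_bot : IsLinearForest (⊥ : SimpleGraph V) := by
  refine ⟨isAcyclic_bot, fun v => ?_⟩
  have : (⊥ : SimpleGraph V).neighborSet v = ∅ := by ext z; simp [SimpleGraph.neighborSet]
  rw [this]
  simp

lemma exists_partition [Fintype V] (k : ℕ) :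
    ∀ n (G : SimpleGraph V), G.edgeSet.ncard = n → G.IsAcyclic →
      (∀ v, (G.neighborSet v).ncard ≤ 2 * k) →
      ∃ F : Fin k → SimpleGraph V, IsLinearForestPartition G k F := by
  classical
  intro n
  induction n using Nat.strong_induction_on with
  | _ n ih =>
  intro G hn hac hdeg
  by_cases hne : G.edgeSet.Nonempty
  case neg =>
    refine ⟨fun _ => ⊥, fun _ => isLinearForest_bot, fun i j _ => by simp, ?_⟩
    rw [Set.not_nonempty_iff_eq_empty.mp hne]
    simp
  case pos =>
  obtain ⟨v, u, hvu, hnbr⟩ := exists_leaf hac hne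
  set e : Sym2 V := s(v,u) with hedef
  set G' := G.deleteEdges {e} with hG'
  have hle : G' ≤ G := G.deleteEdges_le _
  have hac' : G'.IsAcyclic := isAcyclic_mono hle hac
  have hE' : G'.edgeSet = G.edgeSet \ {e} := G.edgeSet_deleteEdges _
  have heG : e ∈ G.edgeSet := hvu
  have hn' : G'.edgeSet.ncard = n - 1 := by
    rw [hE', Set.ncard_diff_singleton_of_mem heG, hn]
  have hnpos : 1 ≤ n := by
    rw [← hn]
    exact (Set.ncard_pos (Set.toFinite _)).mpr hne
  have hadj' : ∀ a b, G'.Adj a b ↔ G.Adj a b ∧ s(a,b) ≠ e := by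
    intro a b
    rw [hG', deleteEdges_adj, Set.mem_singleton_iff]
  have hnbrv : G'.neighborSet v = ∅ := by
    ext z
    simp only [mem_neighborSet, Set.mem_empty_iff_false, iff_false]
    rw [hadj']
    rintro ⟨h1, h2⟩
    have hz : z = u := by
      have h3 : z ∈ G.neighborSet v := h1
      rw [hnbr] at h3
      exact h3
    exact h2 (by rw [hz])
  have hnbru : G'.neighborSet u = G.neighborSet u \ {v} := by
    ext z
    simp only [mem_neighborSet, Set.mem_diff, Set.mem_singleton_iff]
    rw [hadj']
    have : s(u,z) = e ↔ z = v := by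
      rw [hedef, Sym2.eq_swap (a := v), Sym2.congr_right]
    constructor
    · rintro ⟨h1, h2⟩; exact ⟨h1, fun hz => h2 (this.mpr hz)⟩
    · rintro ⟨h1, h2⟩; exact ⟨h1, fun hz => h2 (this.mp hz)⟩
  have hdeg' : ∀ w, (G'.neighborSet w).ncard ≤ 2 * k := fun w =>
    le_trans (Set.ncard_le_ncard (fun z hz => hle hz)) (hdeg w)
  obtain ⟨F', hF'lin, hF'disj, hF'union⟩ := ih (n-1) (by omega) G' hn' hac' hdeg'
  have hFle : ∀ i, F' i ≤ G' := fun i =>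
    edgeSet_subset_edgeSet.mp (hF'union ▸ Set.subset_iUnion (fun i => (F' i).edgeSet) i)
  have hAe : ∀ i, e ∉ (F' i).edgeSet := by
    intro i hi
    have : e ∈ G'.edgeSet := hF'union ▸ Set.mem_iUnion.mpr ⟨i, hi⟩
    rw [hE'] at this
    exact this.2 rfl
  -- the counting step
  have hnbrUnion : (⋃ i, (F' i).neighborSet u) = G'.neighborSet u := by
    ext z
    simp only [Set.mem_iUnion, mem_neighborSet, ← mem_edgeSet]
    rw [← hF'union]
    simp [Set.mem_iUnion]
  have hkey : ∃ i0, ((F' i0).neighborSet u).ncard ≤ 1 := by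
    by_contra hcon
    push_neg at hcon
    set T : Fin k → Finset V := fun i => (Set.toFinite ((F' i).neighborSet u)).toFinset with hT
    have hTcard : ∀ i, (T i).card = ((F' i).neighborSet u).ncard := fun i =>
      (Set.ncard_eq_toFinset_card _ _).symm
    have hdisjT : ∀ (i : Fin k), i ∈ (Finset.univ : Finset (Fin k)) → ∀ (j : Fin k), j ∈ Finset.univ
        → i ≠ j → Disjoint (T i) (T j) := by
      intro i _ j _ hij
      rw [Finset.disjoint_left]
      intro z hzi hzj
      rw [hT] at hzi hzj
      simp only [Set.Finite.mem_toFinset, mem_neighborSet] at hzi hzj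
      exact (hF'disj hij).le_bot ⟨(mem_edgeSet _).mpr hzi, (mem_edgeSet _).mpr hzj⟩
    have hbiU : G'.neighborSet u = ↑(Finset.univ.biUnion T) := by
      rw [← hnbrUnion]
      ext z
      simp [hT, Set.Finite.mem_toFinset]
    have h1 : (G'.neighborSet u).ncard = ∑ i, (T i).card := by
      rw [hbiU, Set.ncard_coe_finset, Finset.card_biUnion hdisjT]
    have h2 : 2 * k ≤ ∑ i, (T i).card := by
      calc 2 * k = ∑ _i : Fin k, 2 := by simp [Finset.sum_const, mul_comm]
      _ ≤ ∑ i, (T i).card := Finset.sum_le_sum (fun i _ => by rw [hTcard]; exact hcon i)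
    have h3 : (G'.neighborSet u).ncard + 1 = (G.neighborSet u).ncard := by
      rw [hnbru, Set.ncard_diff_singleton_of_mem (by exact hvu.symm)]
      have : 1 ≤ (G.neighborSet u).ncard :=
        (Set.ncard_pos (Set.toFinite _)).mpr ⟨v, hvu.symm⟩
      omega
    have h4 := hdeg u
    omega
  obtain ⟨i0, hi0⟩ := hkey
  have hFv : (F' i0).neighborSet v = ∅ :=
    Set.eq_empty_of_subset_empty (hnbrv ▸ fun z hz => (hFle i0) hz)
  set Enew := F' i0 ⊔ SimpleGraph.fromEdgeSet {e} with hEnew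
  have hadjE : ∀ a b, Enew.Adj a b ↔ (F' i0).Adj a b ∨ (s(a,b) = e ∧ a ≠ b) := by
    intro a b
    rw [hEnew, sup_adj, fromEdgeSet_adj, Set.mem_singleton_iff]
  have hEnewEdge : Enew.edgeSet = (F' i0).edgeSet ∪ {e} := by
    rw [hEnew, edgeSet_sup, edgeSet_fromEdgeSet]
    congr 1
    ext z
    simp only [Set.mem_diff, Set.mem_singleton_iff, Set.mem_setOf_eq]
    constructor
    · rintro ⟨h1, _⟩; exact h1
    · rintro rfl
      exact ⟨rfl, by rw [hedef]; simp [Sym2.mk_isDiag_iff, hvu.ne]⟩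
  have hEv : Enew.neighborSet v = {u} := by
    ext z
    simp only [mem_neighborSet, Set.mem_singleton_iff]
    rw [hadjE]
    constructor
    · rintro (h1 | ⟨h1, _⟩)
      · exfalso
        have h3 : z ∈ (F' i0).neighborSet v := h1
        rw [hFv] at h3
        exact h3
      · rwa [hedef, Sym2.congr_right] at h1
    · rintro rfl
      exact Or.inr ⟨rfl, hvu.ne⟩
  have hEu : Enew.neighborSet u = (F' i0).neighborSet u ∪ {v} := by
    ext z
    simp only [mem_neighborSet, Set.mem_union, Set.mem_singleton_iff]
    rw [hadjE]
    have hsym : s(u,z) = e ↔ z = v := by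
      rw [hedef, Sym2.eq_swap (a := v), Sym2.congr_right]
    constructor
    · rintro (h1 | ⟨h1, _⟩)
      · exact Or.inl h1
      · exact Or.inr (hsym.mp h1)
    · rintro (h1 | rfl)
      · exact Or.inl h1
      · exact Or.inr ⟨hsym.mpr rfl, fun h => hvu.ne h.symm⟩
  have hEw : ∀ w, w ≠ v → w ≠ u → Enew.neighborSet w = (F' i0).neighborSet w := by
    intro w hwv hwu
    ext z
    simp only [mem_neighborSet]
    rw [hadjE]
    constructor
    · rintro (h1 | ⟨h1, _⟩)
      · exact h1
      · exfalso
        rw [hedef, Sym2.eq_iff] at h1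
        rcases h1 with ⟨h, _⟩ | ⟨h, _⟩
        · exact hwv h
        · exact hwu h
    · exact Or.inl
  have hElin : IsLinearForest Enew := by
    constructor
    · rw [hEnew]
      exact pendant_acyclic (hF'lin i0).1 hvu.ne
        (fun w hw => by rw [← mem_neighborSet, hFv] at hw; exact hw)
    · intro w
      by_cases hwv : w = v
      · subst hwv; rw [hEv]; simp
      by_cases hwu : w = u
      · rw [hwu, hEu]
        calc ((F' i0).neighborSet u ∪ {v}).ncard
            ≤ ((F' i0).neighborSet u).ncard + ({v} : Set V).ncard := Set.ncard_union_le _ _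
          _ ≤ 1 + 1 := by rw [Set.ncard_singleton]; omega
          _ ≤ 2 := by omega
      · rw [hEw w hwv hwu]
        exact (hF'lin i0).2 w
  refine ⟨Function.update F' i0 Enew, ?_, ?_, ?_⟩
  · intro i
    by_cases hi : i = i0
    · subst hi; rw [Function.update_self]; exact hElin
    · rw [Function.update_of_ne hi]; exact hF'lin i
  · have hupdate : ∀ i, (Function.update F' i0 Enew i).edgeSet =
        (F' i).edgeSet ∪ (if i = i0 then {e} else ∅) := by
      intro i
      by_cases hi : i = i0
      · subst hi; rw [Function.update_self, hEnewEdge]; simp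
      · rw [Function.update_of_ne hi]; simp [hi]
    intro i j hij
    rw [Set.disjoint_left]
    intro z hz hz'
    rw [hupdate] at hz hz'
    have hite : ∀ (i' : Fin k), z ∈ (if i' = i0 then ({e} : Set (Sym2 V)) else ∅) →
        z = e ∧ i' = i0 := by
      intro i' h
      by_cases hi' : i' = i0
      · rw [if_pos hi', Set.mem_singleton_iff] at h; exact ⟨h, hi'⟩
      · rw [if_neg hi'] at h; exact absurd h (Set.notMem_empty z)
    rcases hz with hz | hz <;> rcases hz' with hz' | hz'
    · exact (hF'disj hij).le_bot ⟨hz, hz'⟩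
    · exact hAe i ((hite j hz').1 ▸ hz)
    · exact hAe j ((hite i hz).1 ▸ hz')
    · exact hij ((hite i hz).2.trans (hite j hz').2.symm)
  · have hupdate : ∀ i, (Function.update F' i0 Enew i).edgeSet =
        (F' i).edgeSet ∪ (if i = i0 then {e} else ∅) := by
      intro i
      by_cases hi : i = i0
      · subst hi; rw [Function.update_self, hEnewEdge]; simp
      · rw [Function.update_of_ne hi]; simp [hi]
    ext z
    simp only [Set.mem_iUnion]
    constructor
    · rintro ⟨i, hz⟩
      rw [hupdate] at hz
      rcases hz with hz | hz
      · have : z ∈ G'.edgeSet := hF'union ▸ Set.mem_iUnion.mpr ⟨i, hz⟩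
        exact (hE' ▸ this).1
      · by_cases hi : i = i0
        · rw [if_pos hi, Set.mem_singleton_iff] at hz
          exact hz ▸ heG
        · rw [if_neg hi] at hz
          exact absurd hz (Set.notMem_empty z)
    · intro hz
      by_cases hze : z = e
      · exact ⟨i0, by rw [hupdate, if_pos rfl]; exact Or.inr (by simp [hze])⟩
      · have : z ∈ G'.edgeSet := by rw [hE']; exact ⟨hz, hze⟩
        rw [← hF'union] at this
        obtain ⟨i, hi⟩ := Set.mem_iUnion.mp this
        exact ⟨i, by rw [hupdate]; exact Or.inl hi⟩

end Aux

open SimpleGraph in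
/-- A forest `G` (a 1-degenerate graph) has a partition of its edge set into
`⌈Δ(G)/2⌉` linear forests; hence, when `G` has at least one edge, its linear
arboricity equals `⌈Δ(G)/2⌉`. -/
theorem linear_arboricity_of_forest
    {V : Type*} [Fintype V] [DecidableEq V] (G : SimpleGraph V) [DecidableRel G.Adj]
    (hforest : G.IsAcyclic) :
    (∃ F : Fin ((G.maxDegree + 1) / 2) → SimpleGraph V,
        IsLinearForestPartition G ((G.maxDegree + 1) / 2) F) ∧
    (G.edgeSet.Nonempty →
      ∀ s : ℕ, (∃ F : Fin s → SimpleGraph V, IsLinearForestPartition G s F) →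
        (G.maxDegree + 1) / 2 ≤ s) := by
  classical
  have hncard : ∀ v, (G.neighborSet v).ncard = G.degree v := fun v => by
    rw [← Nat.card_coe_set_eq, Nat.card_eq_fintype_card, card_neighborSet_eq_degree]
  constructor
  · apply exists_partition ((G.maxDegree + 1) / 2) G.edgeSet.ncard G rfl hforest
    intro v
    rw [hncard]
    have h1 := G.degree_le_maxDegree v
    omega
  · rintro hne s ⟨F, hFlin, _, hFunion⟩
    have hV : Nonempty V := by
      obtain ⟨e, _⟩ := hne
      exact ⟨e.out.1⟩
    obtain ⟨vm, hvm⟩ := G.exists_maximal_degree_vertex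
    set T : Fin s → Finset V := fun i => (Set.toFinite ((F i).neighborSet vm)).toFinset with hT
    have hsub : G.neighborFinset vm ⊆ Finset.univ.biUnion T := by
      intro z hz
      rw [mem_neighborFinset] at hz
      have hz' : s(vm,z) ∈ G.edgeSet := hz
      rw [← hFunion] at hz'
      obtain ⟨i, hi⟩ := Set.mem_iUnion.mp hz'
      refine Finset.mem_biUnion.mpr ⟨i, Finset.mem_univ i, ?_⟩
      rw [hT]
      simp only [Set.Finite.mem_toFinset, mem_neighborSet]
      exact hi
    have hdeg : G.degree vm ≤ 2 * s := by
      calc G.degree vm = (G.neighborFinset vm).card := rfl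
        _ ≤ (Finset.univ.biUnion T).card := Finset.card_le_card hsub
        _ ≤ ∑ i, (T i).card := Finset.card_biUnion_le
        _ ≤ ∑ _i : Fin s, 2 := Finset.sum_le_sum (fun i _ => by
            rw [hT, ← Set.ncard_eq_toFinset_card ((F i).neighborSet vm) (Set.toFinite _)]
            exact (hFlin i).2 vm)
        _ = 2 * s := by simp [Finset.sum_const, mul_comm]
    rw [hvm] at *
    omega
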